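/- Suppose X ⊆ ℝ^d is nonempty, compact and convex, f is lower semicontinuous on X × cl(Δ) and x ↦ f(x,δ) is convex on X for every δ ∈ cl(Δ), Slater's condition holds (there exists x_0 ∈ X with s := sup_{δ ∈ cl(Δ)} f(x_0,δ) < 0), and for every x ∈ X the map δ ↦ f(x,δ) is Lipschitz on cl(Δ) with constant L_δ. Define L_SP := ((min_{x ∈ X} c·x) − c·x_0)/s ≥ 0. Then for every N ≥ 1 and all ω = (δ_1,…,δ_N), ω' = (δ'_1,…,δ'_N) ∈ cl(Δ)^N, |g_N(ω) − g_N(ω')| ≤ L_SP · L_δ · max_{1≤i≤N} ‖δ_i − δ'_i‖. -/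

import Mathlib

open MeasureTheory Set

/-- Scenario optimal value `g_N(ω) = inf { c·x : x ∈ X, f(x, δ_i) ≤ 0, i = 1,…,N }`. -/
noncomputable def scenVal {d m N : ℕ} (X : Set (EuclideanSpace ℝ (Fin d)))
    (c : EuclideanSpace ℝ (Fin d))
    (f : EuclideanSpace ℝ (Fin d) → EuclideanSpace ℝ (Fin m) → ℝ)
    (ω : Fin N → EuclideanSpace ℝ (Fin m)) : ℝ :=
  sInf ((fun x => ∑ i, c i * x i) '' {x ∈ X | ∀ i, f x (ω i) ≤ 0})

/-- Robust optimal value `J* = inf { c·x : x ∈ X, f(x,δ) ≤ 0 for all δ ∈ Δ }`. -/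
noncomputable def robustVal {d m : ℕ} (X : Set (EuclideanSpace ℝ (Fin d)))
    (c : EuclideanSpace ℝ (Fin d))
    (f : EuclideanSpace ℝ (Fin d) → EuclideanSpace ℝ (Fin m) → ℝ)
    (Δ : Set (EuclideanSpace ℝ (Fin m))) : ℝ :=
  sInf ((fun x => ∑ i, c i * x i) '' {x ∈ X | ∀ δ ∈ Δ, f x δ ≤ 0})

/-- Under Slater's condition and Lipschitz continuity of f in δ, the scenario value
function g_N is Lipschitz: |g_N(ω) − g_N(ω')| ≤ L_SP·L_δ·max_i ‖δ_i − δ'_i‖ on cl(Δ)^N,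
where L_SP = ((min_{x∈X} c·x) − c·x₀)/s and s = sup_{δ ∈ cl(Δ)} f(x₀,δ) < 0. -/
theorem stmt_13 {d m : ℕ}
    (X : Set (EuclideanSpace ℝ (Fin d))) (hXne : X.Nonempty)
    (hXcomp : IsCompact X) (hXconv : Convex ℝ X)
    (c : EuclideanSpace ℝ (Fin d))
    (Δ : Set (EuclideanSpace ℝ (Fin m))) (hΔne : Δ.Nonempty)
    (f : EuclideanSpace ℝ (Fin d) → EuclideanSpace ℝ (Fin m) → ℝ)
    (hlsc : LowerSemicontinuousOn (Function.uncurry f) (X ×ˢ closure Δ))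
    (hconv : ∀ δ ∈ closure Δ, ConvexOn ℝ X fun x => f x δ)
    -- Slater's condition
    (x₀ : EuclideanSpace ℝ (Fin d)) (hx₀ : x₀ ∈ X)
    (s : ℝ) (hs : s = sSup ((f x₀) '' closure Δ)) (hsneg : s < 0)
    -- Lipschitz continuity of f in δ
    (Lδ : ℝ)
    (hfLip : ∀ x ∈ X, ∀ δ ∈ closure Δ, ∀ δ' ∈ closure Δ,
      |f x δ - f x δ'| ≤ Lδ * ‖δ - δ'‖)
    -- L_SP
    (LSP : ℝ)
    (hLSP : LSP = (sInf ((fun x => ∑ i, c i * x i) '' X) - ∑ i, c i * x₀ i) / s)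
    (N : ℕ) (hN : 1 ≤ N)
    (ω ω' : Fin N → EuclideanSpace ℝ (Fin m))
    (hω : ∀ i, ω i ∈ closure Δ) (hω' : ∀ i, ω' i ∈ closure Δ) :
    0 ≤ LSP ∧
      |scenVal X c f ω - scenVal X c f ω'| ≤
        LSP * Lδ * Finset.univ.sup' (Finset.univ_nonempty_iff.mpr ⟨⟨0, hN⟩⟩)
          (fun i => ‖ω i - ω' i‖) := by
  classical
  set obj : EuclideanSpace ℝ (Fin d) → ℝ := fun x => ∑ i, c i * x i with hobj
  have hobjC : Continuous obj := by
    apply continuous_finset_sum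
    intro i _
    exact (continuous_const.mul ((continuous_apply i).comp
      (PiLp.continuous_ofLp (p := 2) (β := fun _ : Fin d => ℝ))))
  -- J = min of objective over X
  set J : ℝ := sInf (obj '' X) with hJ
  have hJbdd : BddBelow (obj '' X) :=
    (hXcomp.image hobjC).bddBelow
  have hJle : ∀ x ∈ X, J ≤ obj x := fun x hx => csInf_le hJbdd ⟨x, hx, rfl⟩
  have hJx₀ : J ≤ obj x₀ := hJle x₀ hx₀
  -- s bounds f x₀ on closure Δ
  have hclne : (closure Δ).Nonempty := hΔne.closure
  have hbddA : BddAbove (f x₀ '' closure Δ) := by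
    by_contra h
    rw [Real.sSup_of_not_bddAbove h] at hs
    linarith
  have hfx₀ : ∀ δ ∈ closure Δ, f x₀ δ ≤ s := by
    intro δ hδ
    rw [hs]
    exact le_csSup hbddA ⟨δ, hδ, rfl⟩
  -- LSP ≥ 0
  have hLSP0 : 0 ≤ LSP := by
    rw [hLSP]
    rw [← neg_div_neg_eq]
    apply div_nonneg _ (by linarith)
    simp only [neg_nonneg]
    exact sub_nonpos.2 hJx₀
  have hLSPs : LSP * s = J - obj x₀ := by
    rw [hLSP, div_mul_cancel₀ _ hsneg.ne]
  refine ⟨hLSP0, ?_⟩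
  -- the max discrepancy
  set ρ : ℝ := Finset.univ.sup' (Finset.univ_nonempty_iff.mpr ⟨⟨0, hN⟩⟩)
      (fun i => ‖ω i - ω' i‖) with hρ
  have hρ_ge : ∀ i : Fin N, ‖ω i - ω' i‖ ≤ ρ := fun i => by
    rw [hρ]
    exact Finset.le_sup' (fun i => ‖ω i - ω' i‖) (Finset.mem_univ i)
  have hρ0 : 0 ≤ ρ := le_trans (norm_nonneg _) (hρ_ge ⟨0, hN⟩)
  set r : ℝ := Lδ * ρ with hr
  -- r ≥ 0 and each Lδ‖ω i - ω' i‖ ≤ r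
  have hkey : (0 ≤ r) ∧ ∀ i : Fin N, Lδ * ‖ω i - ω' i‖ ≤ r := by
    rcases eq_or_lt_of_le hρ0 with h0 | hpos
    · have hall : ∀ i : Fin N, ‖ω i - ω' i‖ = 0 := fun i =>
        le_antisymm (h0 ▸ hρ_ge i) (norm_nonneg _)
      constructor
      · simp [hr, ← h0]
      · intro i; rw [hall i]; simp [hr, ← h0]
    · obtain ⟨i, -, hieq⟩ := Finset.exists_mem_eq_sup'
        (Finset.univ_nonempty_iff.mpr ⟨(⟨0, hN⟩ : Fin N)⟩)
        (fun i => ‖ω i - ω' i‖)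
      have hLδ0 : 0 ≤ Lδ := by
        have h1 : 0 ≤ Lδ * ‖ω i - ω' i‖ :=
          le_trans (abs_nonneg _) (hfLip x₀ hx₀ (ω i) (hω i) (ω' i) (hω' i))
        have h2 : 0 < ‖ω i - ω' i‖ := by rw [← hieq]; exact hpos
        rw [mul_comm] at h1
        exact nonneg_of_mul_nonneg_right h1 h2
      exact ⟨mul_nonneg hLδ0 hρ0, fun j =>
        mul_le_mul_of_nonneg_left (hρ_ge j) hLδ0⟩
  obtain ⟨hr0, hrle⟩ := hkey
  have hrs : 0 < r - s := by linarith
  -- one-sided estimate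
  have key : ∀ (a b : Fin N → EuclideanSpace ℝ (Fin m)),
      (∀ i, a i ∈ closure Δ) → (∀ i, b i ∈ closure Δ) →
      (∀ i, Lδ * ‖a i - b i‖ ≤ r) →
      scenVal X c f a ≤ scenVal X c f b + LSP * r := by
    intro a b ha hb hab
    set lam : ℝ := r / (r - s) with hlam
    have hlam0 : 0 ≤ lam := div_nonneg hr0 hrs.le
    have hlam1 : lam ≤ 1 := by
      rw [hlam, div_le_one hrs]; linarith
    have hlam_eq : lam * (r - s) = r := div_mul_cancel₀ r hrs.ne'
    have hbddF : ∀ (w : Fin N → EuclideanSpace ℝ (Fin m)),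
        BddBelow (obj '' {x ∈ X | ∀ i, f x (w i) ≤ 0}) := fun w =>
      hJbdd.mono (image_mono (f := obj) (sep_subset _ _))
    -- nonemptiness of feasible region for b via x₀
    have hx₀feas : ∀ (w : Fin N → EuclideanSpace ℝ (Fin m)),
        (∀ i, w i ∈ closure Δ) → x₀ ∈ {x ∈ X | ∀ i, f x (w i) ≤ 0} := by
      intro w hw
      exact ⟨hx₀, fun i => le_trans (hfx₀ _ (hw i)) hsneg.le⟩
    have hne_b : (obj '' {x ∈ X | ∀ i, f x (b i) ≤ 0}).Nonempty :=
      ⟨obj x₀, x₀, hx₀feas b hb, rfl⟩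
    unfold scenVal
    rw [← sub_le_iff_le_add]
    apply le_csInf hne_b
    rintro y ⟨x, ⟨hxX, hxfeas⟩, rfl⟩
    -- build the shifted point
    set xl : EuclideanSpace ℝ (Fin d) := (1 - lam) • x + lam • x₀ with hxl
    have hxlX : xl ∈ X := hXconv hxX hx₀ (by linarith) hlam0 (by ring)
    have hxlfeas : ∀ i, f xl (a i) ≤ 0 := by
      intro i
      have hcv := (hconv (a i) (ha i)).2 hxX hx₀ (by linarith : (0:ℝ) ≤ 1 - lam)
        hlam0 (by ring)
      simp only [smul_eq_mul] at hcv
      have hfa : f x (a i) ≤ r := by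
        have := hfLip x hxX (a i) (ha i) (b i) (hb i)
        have h1 : f x (a i) - f x (b i) ≤ Lδ * ‖a i - b i‖ :=
          le_trans (le_abs_self _) this
        have := hab i
        have := hxfeas i
        linarith
      have hfx₀a : f x₀ (a i) ≤ s := hfx₀ _ (ha i)
      nlinarith [hcv, hlam_eq]
    have hobjxl : obj xl = (1 - lam) * obj x + lam * obj x₀ := by
      simp only [hobj, hxl, Finset.mul_sum]
      rw [← Finset.sum_add_distrib]
      apply Finset.sum_congr rfl
      intro i _
      have : ((1 - lam) • x + lam • x₀) i = (1 - lam) * x i + lam * x₀ i := by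
        simp [PiLp.add_apply, PiLp.smul_apply, smul_eq_mul]
      rw [this]; ring
    have h1 : sInf (obj '' {x ∈ X | ∀ i, f x (a i) ≤ 0}) ≤ obj xl :=
      csInf_le (hbddF a) ⟨xl, ⟨hxlX, hxlfeas⟩, rfl⟩
    have h2 : obj xl ≤ obj x + LSP * r := by
      rw [hobjxl]
      have hJx : J ≤ obj x := hJle x hxX
      -- lam * (obj x₀ - obj x) ≤ LSP * r
      nlinarith [mul_nonneg hLSP0 (mul_nonneg hlam0 hr0),
        mul_nonneg hlam0 (sub_nonneg.2 hJx),
        mul_le_mul_of_nonneg_left hlam_eq.ge hLSP0, hLSPs]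
    linarith [le_trans h1 h2]
  have e : LSP * Lδ * ρ = LSP * r := by rw [hr, mul_assoc]
  have h₁ := key ω ω' hω hω' hrle
  have h₂ := key ω' ω hω' hω (fun i => by rw [norm_sub_rev]; exact hrle i)
  rw [e, abs_sub_le_iff]
  exact ⟨by linarith, by linarith⟩
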